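/- Let n, B, K be natural numbers with B ≥ 2, and let F be a finite family of block assignments β : Fin (2n) → Fin K, each of whose fibers has at most B elements. Suppose that for every bijection σ : Fin n ≃ Fin n there exists some β ∈ F with β(i) = β(n + σ(i)) for all i ∈ Fin n. Then, as real numbers, |F| ≥ (2n/(e·B))^n. -/

import Mathlib

/-- If a finite family `F` of block assignments `β : Fin (2n) → Fin K`, each with
fibers of size at most `B` (where `B ≥ 2`), solves every proximate-neighbors
instance `σ : Fin n ≃ Fin n`, then, as real numbers, `|F| ≥ (2n/(e·B))^n`. -/
theorem stmt3 (n B K : ℕ) (hB : 2 ≤ B) (F : Finset (Fin (2 * n) → Fin K))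
    (hfib : ∀ β ∈ F, ∀ k : Fin K, (Finset.univ.filter fun x => β x = k).card ≤ B)
    (hcov : ∀ σ : Equiv.Perm (Fin n), ∃ β ∈ F, ∀ i : Fin n,
      β ⟨i.val, by omega⟩ = β ⟨n + (σ i).val, by omega⟩) :
    (F.card : ℝ) ≥ ((2 * n : ℝ) / (Real.exp 1 * (B : ℝ))) ^ n := by
  classical
  set m := B / 2 with hm
  have hm1 : 1 ≤ m := by omega
  set S : (Fin (2 * n) → Fin K) → Finset (Equiv.Perm (Fin n)) := fun β =>
    Finset.univ.filter (fun σ => ∀ i : Fin n,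
      β ⟨i.val, by omega⟩ = β ⟨n + (σ i).val, by omega⟩) with hS
  have key : ∀ β, β ∈ F → (S β).card ≤ m ^ n := by
    intro β hβ
    rcases (S β).eq_empty_or_nonempty with h | ⟨σ0, hσ0⟩
    · simp only [h, Finset.card_empty]
      exact Nat.zero_le _
    rw [hS, Finset.mem_filter] at hσ0
    have hσ0' := hσ0.2
    set D : Fin n → Finset (Fin n) := fun i =>
      Finset.univ.filter (fun j => β ⟨n + j.val, by omega⟩ = β ⟨i.val, by omega⟩) with hD
    have hDcard : ∀ i, (D i).card ≤ m := by
      intro i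
      set A : Finset (Fin n) :=
        Finset.univ.filter (fun i' => β ⟨i'.val, by omega⟩ = β ⟨i.val, by omega⟩) with hA
      have hDA : (D i).card ≤ A.card := by
        apply Finset.card_le_card_of_injOn (fun j => σ0⁻¹ j)
        · intro j hj
          simp only [hD, Finset.mem_coe, Finset.mem_filter, Finset.mem_univ, true_and] at hj
          simp only [hA, Finset.mem_coe, Finset.mem_filter, Finset.mem_univ, true_and]
          have h1 := hσ0' (σ0⁻¹ j)
          have h2 : σ0 (σ0⁻¹ j) = j := Equiv.apply_symm_apply σ0 j
          have h3 : (⟨n + (σ0 (σ0⁻¹ j)).val, by omega⟩ : Fin (2 * n)) =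
              (⟨n + j.val, by omega⟩ : Fin (2 * n)) := Fin.ext (by simp [h2])
          exact h1.trans ((congrArg β h3).trans hj)
        · intro a _ b _ hab
          exact (Equiv.injective σ0⁻¹) hab
      set fib : Finset (Fin (2 * n)) :=
        Finset.univ.filter (fun x => β x = β ⟨i.val, by omega⟩) with hfibset
      have hfibB : fib.card ≤ B := hfib β hβ _
      have hsplit : A.card + (D i).card ≤ fib.card := by
        have h1 : A.card = ((fib.filter (fun x => x.val < n))).card := by
          apply Finset.card_bij (fun a _ => (⟨a.val, by omega⟩ : Fin (2 * n)))
          · intro a ha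
            simp only [hA, Finset.mem_filter, Finset.mem_univ, true_and] at ha
            simp only [hfibset, Finset.mem_filter, Finset.mem_univ, true_and]
            exact ⟨ha, a.isLt⟩
          · intro a _ b _ hab
            simp only [Fin.mk.injEq] at hab
            exact Fin.ext hab
          · intro x hx
            simp only [hfibset, Finset.mem_filter, Finset.mem_univ, true_and] at hx
            refine ⟨⟨x.val, hx.2⟩, ?_, rfl⟩
            simp only [hA, Finset.mem_filter, Finset.mem_univ, true_and]
            exact hx.1
        have h2 : (D i).card = ((fib.filter (fun x => ¬ x.val < n))).card := by
          apply Finset.card_bij (fun j _ => (⟨n + j.val, by omega⟩ : Fin (2 * n)))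
          · intro j hj
            simp only [hD, Finset.mem_filter, Finset.mem_univ, true_and] at hj
            simp only [hfibset, Finset.mem_filter, Finset.mem_univ, true_and]
            exact ⟨hj, by omega⟩
          · intro a _ b _ hab
            simp only [Fin.mk.injEq] at hab
            exact Fin.ext (by omega)
          · intro x hx
            simp only [hfibset, Finset.mem_filter, Finset.mem_univ, true_and] at hx
            refine ⟨⟨x.val - n, by omega⟩, ?_, ?_⟩
            · simp only [hD, Finset.mem_filter, Finset.mem_univ, true_and]
              have hxx : (⟨n + (x.val - n), by omega⟩ : Fin (2 * n)) = x := Fin.ext (by simp; omega)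
              rw [hxx]; exact hx.1
            · exact Fin.ext (by simp; omega)
        rw [h1, h2, Finset.card_filter_add_card_filter_not]
      omega
    have hinj : (S β).card ≤ (Fintype.piFinset D).card := by
      apply Finset.card_le_card_of_injOn (fun σ : Equiv.Perm (Fin n) => (σ : Fin n → Fin n))
      · intro σ hσ
        rw [hS, Finset.mem_coe, Finset.mem_filter] at hσ
        rw [Finset.mem_coe, Fintype.mem_piFinset]
        intro i
        simp only [hD, Finset.mem_filter, Finset.mem_univ, true_and]
        exact (hσ.2 i).symm
      · intro a _ b _ hab
        exact Equiv.coe_fn_injective hab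
    calc (S β).card ≤ (Fintype.piFinset D).card := hinj
      _ = ∏ i, (D i).card := Fintype.card_piFinset D
      _ ≤ ∏ _i : Fin n, m := Finset.prod_le_prod' (fun i _ => hDcard i)
      _ = m ^ n := by simp [Finset.prod_const]
  have hcount : n.factorial ≤ F.card * m ^ n := by
    have hsub : (Finset.univ : Finset (Equiv.Perm (Fin n))) ⊆ F.biUnion S := by
      intro σ _
      obtain ⟨β, hβF, hβ⟩ := hcov σ
      exact Finset.mem_biUnion.mpr ⟨β, hβF, by
        rw [hS, Finset.mem_filter]; exact ⟨Finset.mem_univ _, hβ⟩⟩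
    calc n.factorial = (Finset.univ : Finset (Equiv.Perm (Fin n))).card := by
          rw [Finset.card_univ, Fintype.card_perm, Fintype.card_fin]
      _ ≤ (F.biUnion S).card := Finset.card_le_card hsub
      _ ≤ ∑ β ∈ F, (S β).card := Finset.card_biUnion_le
      _ ≤ ∑ _β ∈ F, m ^ n := Finset.sum_le_sum key
      _ = F.card * m ^ n := by rw [Finset.sum_const, smul_eq_mul]
  have hmpos : (0:ℝ) < m := by positivity
  have he : (0:ℝ) < Real.exp 1 := Real.exp_pos 1
  have hnn : (n:ℝ) ^ n ≤ n.factorial * Real.exp 1 ^ n := by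
    have h := Real.pow_div_factorial_le_exp (x := (n : ℝ)) (Nat.cast_nonneg n) n
    rw [div_le_iff₀ (by positivity)] at h
    have hh : Real.exp (n : ℝ) = Real.exp 1 ^ n := by
      rw [← Real.exp_nat_mul]; norm_num
    rw [hh] at h
    linarith [h]
  have hfact : ((n.factorial : ℝ)) ≤ (F.card : ℝ) * (m : ℝ) ^ n := by
    exact_mod_cast hcount
  have h2m : (2:ℝ) * m ≤ B := by
    have : 2 * m ≤ B := by omega
    exact_mod_cast this
  rw [ge_iff_le]
  have hx : (2 * n : ℝ) / (Real.exp 1 * B) ≤ (n : ℝ) / (Real.exp 1 * m) := by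
    rw [div_le_div_iff₀ (by positivity) (by positivity)]
    have hn0 : (0:ℝ) ≤ n := Nat.cast_nonneg n
    nlinarith [mul_nonneg (mul_nonneg he.le hn0) (sub_nonneg.mpr h2m)]
  calc ((2 * n : ℝ) / (Real.exp 1 * B)) ^ n ≤ ((n : ℝ) / (Real.exp 1 * m)) ^ n :=
        pow_le_pow_left₀ (by positivity) hx n
    _ = (n : ℝ) ^ n / (Real.exp 1 ^ n * (m : ℝ) ^ n) := by rw [div_pow, mul_pow]
    _ ≤ ((n.factorial : ℝ) * Real.exp 1 ^ n) / (Real.exp 1 ^ n * (m : ℝ) ^ n) := by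
        gcongr
    _ = (n.factorial : ℝ) / (m : ℝ) ^ n := by
        rw [mul_comm (Real.exp 1 ^ n) ((m : ℝ) ^ n)]
        exact mul_div_mul_right _ _ (by positivity)
    _ ≤ (F.card : ℝ) := by
        rw [div_le_iff₀ (by positivity)]
        linarith [hfact]
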